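/- Let (S(t)) be a C₀-semigroup on H and let Q be a bounded self-adjoint nonnegative operator satisfying Hypothesis H, with Q injective. Let (S_Q(t))_{t≥0} be a C₀-semigroup of self-adjoint contractions on H satisfying S(t)Q^{1/2} = Q^{1/2}S_Q(t) for all t ≥ 0, and let A_Q be its generator. Then A_Q is injective: if x ∈ dom(A_Q) and A_Qx = 0, then x = 0. -/

import Mathlib

/-!
STATEMENT 9.  Let (S(t)) be a C₀-semigroup on a separable real Hilbert space H and Q a
bounded self-adjoint nonnegative operator (with square root Q^{1/2}) satisfying
Hypothesis H, with Q injective.  Let (S_Q(t)) be a C₀-semigroup of self-adjoint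
contractions on H satisfying S(t)Q^{1/2} = Q^{1/2}S_Q(t) for all t ≥ 0, with generator
A_Q.  Then A_Q is injective: if x ∈ dom(A_Q) and A_Qx = 0, then x = 0.

The generator is encoded by the predicate `genTo SQ x y` (x ∈ dom(A_Q) and A_Qx = y).
-/

open MeasureTheory Filter Set ContinuousLinearMap
open scoped RealInnerProductSpace ENNReal

noncomputable section

variable {H : Type*} [NormedAddCommGroup H] [InnerProductSpace ℝ H] [CompleteSpace H]

/-- `x ∈ dom(A)` and `Ax = y` for the generator `A` of the semigroup `S`. -/
def genTo (S : ℝ → H →L[ℝ] H) (x y : H) : Prop :=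
  Filter.Tendsto (fun t : ℝ => t⁻¹ • (S t x - x)) (nhdsWithin 0 (Set.Ioi 0)) (nhds y)

theorem statement9 {ι : Type*}
    (S : ℝ → H →L[ℝ] H)
    (hS0 : S 0 = 1)
    (hSadd : ∀ s t : ℝ, 0 ≤ s → 0 ≤ t → S (s + t) = (S s).comp (S t))
    (hScont : ∀ x : H, ContinuousOn (fun t => S t x) (Set.Ici 0))
    (Q sqrtQ : H →L[ℝ] H) (hQsa : IsSelfAdjoint Q) (hQnn : ∀ x : H, 0 ≤ ⟪Q x, x⟫)
    (hsqrt_sa : IsSelfAdjoint sqrtQ) (hsqrt_nn : ∀ x : H, 0 ≤ ⟪sqrtQ x, x⟫)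
    (hsqrt_sq : sqrtQ.comp sqrtQ = Q)
    (hQinj : Function.Injective Q)
    -- (e_i) is an orthonormal basis of H
    (e : ι → H) (he : Orthonormal ℝ e)
    (he_tot : Dense ((Submodule.span ℝ (Set.range e) : Submodule ℝ H) : Set H))
    -- Hypothesis H, part 1: ∫₀^∞ Σ_i |Q^{1/2}S(s)*e_i|² ds < ∞
    (hint : (∫⁻ s in Set.Ioi (0:ℝ),
        ∑' i : ι, (‖sqrtQ (ContinuousLinearMap.adjoint (S s) (e i))‖₊ : ℝ≥0∞) ^ 2) < ⊤)
    -- Hypothesis H, part 2: Q∞ is injective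
    (hQinf_inj : Function.Injective (fun x : H =>
      ∫ s in Set.Ioi (0:ℝ), S s (Q (ContinuousLinearMap.adjoint (S s) x))))
    -- (S_Q(t)) is a C₀-semigroup of self-adjoint contractions intertwined with S by Q^{1/2}
    (SQ : ℝ → H →L[ℝ] H)
    (hSQ0 : SQ 0 = 1)
    (hSQadd : ∀ s t : ℝ, 0 ≤ s → 0 ≤ t → SQ (s + t) = (SQ s).comp (SQ t))
    (hSQcont : ∀ x : H, ContinuousOn (fun t => SQ t x) (Set.Ici 0))
    (hSQsa : ∀ t : ℝ, 0 ≤ t → IsSelfAdjoint (SQ t))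
    (hSQcontr : ∀ t : ℝ, 0 ≤ t → ‖SQ t‖ ≤ 1)
    (hintertwine : ∀ t : ℝ, 0 ≤ t → (S t).comp sqrtQ = sqrtQ.comp (SQ t)) :
    ∀ x : H, genTo SQ x 0 → x = 0 := by
  intro x hx
  by_cases hx0 : x = 0
  · exact hx0
  -- Step 1: SQ t x = x for all t ≥ 0
  have hfix : ∀ t : ℝ, 0 ≤ t → SQ t x = x := by
    intro t ht
    have key : ∀ y ∈ Set.Icc (0:ℝ) t, SQ y x = SQ 0 x := by
      apply constant_of_has_deriv_right_zero
      · exact (hSQcont x).mono (fun s hs => hs.1)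
      · intro u hu
        rw [hasDerivWithinAt_iff_tendsto_slope]
        have hdiff : Set.Ici u \ {u} = Set.Ioi u := by
          ext y; simp [Set.mem_diff, lt_iff_le_and_ne, and_comm, eq_comm]
        rw [hdiff]
        have h1 : Tendsto (fun y : ℝ => y - u) (nhdsWithin u (Set.Ioi u))
            (nhdsWithin 0 (Set.Ioi 0)) := by
          apply tendsto_nhdsWithin_of_tendsto_nhds_of_eventually_within
          · have hb : Tendsto (fun y : ℝ => y - u) (nhds u) (nhds (u - u)) :=
              (continuous_id.sub continuous_const).tendsto u
            rw [sub_self] at hb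
            exact hb.mono_left nhdsWithin_le_nhds
          · filter_upwards [self_mem_nhdsWithin] with y hy
            simpa using hy
        have h2 : Tendsto (fun y : ℝ =>
            (y - u)⁻¹ • (SQ u (SQ (y - u) x) - SQ u x)) (nhdsWithin u (Set.Ioi u)) (nhds 0) := by
          have h3 := ((SQ u).continuous.tendsto 0).comp (hx.comp h1)
          rw [map_zero] at h3
          exact h3.congr (fun y => by
            simp [Function.comp, map_sub, _root_.map_smul])
        refine h2.congr' ?_
        filter_upwards [self_mem_nhdsWithin] with y hy
        have hyu : u < y := hy
        have hcomp : SQ y = (SQ u).comp (SQ (y - u)) := by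
          have := hSQadd u (y - u) hu.1 (by linarith)
          simpa [add_sub_cancel] using this
        rw [slope_def_module, hcomp]
        simp only [ContinuousLinearMap.comp_apply]
    have h1 := key t (Set.mem_Icc.mpr ⟨ht, le_refl t⟩)
    rw [hSQ0] at h1
    simpa using h1
  -- Step 2: sqrtQ x is a fixed point of S
  have hSx : ∀ s : ℝ, 0 ≤ s → S s (sqrtQ x) = sqrtQ x := by
    intro s hs
    have h := congrArg (fun T : H →L[ℝ] H => T x) (hintertwine s hs)
    simp only [ContinuousLinearMap.comp_apply] at h
    rw [h, hfix s hs]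
  -- Step 3: inner products with e i vanish
  have hadj : ∀ w : H, ⟪sqrtQ x, w⟫ = ⟪x, sqrtQ w⟫ := by
    intro w
    have h := ContinuousLinearMap.adjoint_inner_left sqrtQ x w
    rw [hsqrt_sa.adjoint_eq] at h
    exact ((real_inner_comm _ _).trans h.symm).trans (real_inner_comm _ _)
  have hinner : ∀ i : ι, ⟪sqrtQ x, e i⟫ = 0 := by
    intro i
    by_contra hc
    have hxpos : (0:ℝ) < ‖x‖ := norm_pos_iff.mpr hx0
    set c : ℝ := |⟪sqrtQ x, e i⟫| with hcdef
    have hcpos : 0 < c := abs_pos.mpr hc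
    set ε : ℝ := c / ‖x‖ with hεdef
    have hεpos : 0 < ε := div_pos hcpos hxpos
    -- pointwise lower bound on Ioi 0
    have hlow : ∀ s ∈ Set.Ioi (0:ℝ),
        ε ≤ ‖sqrtQ (ContinuousLinearMap.adjoint (S s) (e i))‖ := by
      intro s hs
      have hs0 : (0:ℝ) ≤ s := le_of_lt hs
      have heq : ⟪sqrtQ x, e i⟫ = ⟪x, sqrtQ (ContinuousLinearMap.adjoint (S s) (e i))⟫ := by
        calc ⟪sqrtQ x, e i⟫ = ⟪S s (sqrtQ x), e i⟫ := by rw [hSx s hs0]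
        _ = ⟪sqrtQ x, ContinuousLinearMap.adjoint (S s) (e i)⟫ := by
            rw [← ContinuousLinearMap.adjoint_inner_right (S s)]
        _ = ⟪x, sqrtQ (ContinuousLinearMap.adjoint (S s) (e i))⟫ := hadj _
      have hb : c ≤ ‖x‖ * ‖sqrtQ (ContinuousLinearMap.adjoint (S s) (e i))‖ := by
        rw [hcdef, heq]
        exact abs_real_inner_le_norm _ _
      rw [hεdef, div_le_iff₀ hxpos]
      linarith [hb]
    -- integral of single term is finite
    have hfin : (∫⁻ s in Set.Ioi (0:ℝ),
        (‖sqrtQ (ContinuousLinearMap.adjoint (S s) (e i))‖₊ : ℝ≥0∞) ^ 2) < ⊤ :=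
      lt_of_le_of_lt (lintegral_mono fun s => ENNReal.le_tsum i) hint
    -- but it is bounded below by ε² · ∞ = ∞
    have hinf : (ENNReal.ofReal ε) ^ 2 * volume (Set.Ioi (0:ℝ)) ≤
        ∫⁻ s in Set.Ioi (0:ℝ),
          (‖sqrtQ (ContinuousLinearMap.adjoint (S s) (e i))‖₊ : ℝ≥0∞) ^ 2 := by
      rw [← MeasureTheory.setLIntegral_const]
      apply MeasureTheory.setLIntegral_mono' measurableSet_Ioi
      intro s hs
      have h1 : ENNReal.ofReal ε ≤
          (‖sqrtQ (ContinuousLinearMap.adjoint (S s) (e i))‖₊ : ℝ≥0∞) := by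
        rw [← enorm_eq_nnnorm, ← ofReal_norm]
        exact ENNReal.ofReal_le_ofReal (hlow s hs)
      exact pow_le_pow_left₀ zero_le h1 2
    rw [Real.volume_Ioi, ENNReal.mul_top (by
      simp [pow_eq_zero_iff, ENNReal.ofReal_eq_zero]
      linarith)] at hinf
    exact absurd (lt_of_le_of_lt hinf hfin) (lt_irrefl ⊤)
  -- Step 4: sqrtQ x = 0 by density
  have hQhalf : sqrtQ x = 0 := by
    have hall : ∀ v : H, ⟪sqrtQ x, v⟫ = 0 := by
      have hker : (Submodule.span ℝ (Set.range e) : Submodule ℝ H) ≤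
          LinearMap.ker ((innerSL ℝ (sqrtQ x) : H →L[ℝ] ℝ) : H →ₗ[ℝ] ℝ) := by
        rw [Submodule.span_le]
        rintro _ ⟨i, rfl⟩
        simpa using hinner i
      have hfun : (fun v : H => ⟪sqrtQ x, v⟫) = fun _ => (0:ℝ) := by
        apply Continuous.ext_on he_tot (innerSL ℝ (sqrtQ x)).continuous continuous_const
        intro v hv
        exact hker hv
      intro v
      exact congrFun hfun v
    exact inner_self_eq_zero.mp (hall (sqrtQ x))
  -- Step 5: conclude
  have hQx : Q x = 0 := by
    rw [← hsqrt_sq, ContinuousLinearMap.comp_apply, hQhalf, map_zero]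
  apply hQinj
  rw [hQx, map_zero]
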